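/- Let S ≤ M n be an isotropic submodule such that the set S^⊥ω \ S is nonempty with minimum Pauli weight d. Then the set Ĉ(S)^⊥ \ Ĉ(S) of binary vectors in (Fin n → Fin 4 → ZMod 2) is nonempty and its minimum Hamming weight equals 2d. (This is the distance-doubling part of the Corollary: concatenating an [[n,k,d]] stabilizer code with the [[4,2,2]] code yields a [[4n, 2k, 2d]] self-dual CSS code.) -/
import Mathlib


/-- Binary symplectic representation of `n`-qubit Pauli operators (up to phase). -/
abbrev M (n : ℕ) : Type := Fin n → ZMod 2 × ZMod 2

/-- The symplectic form: two Paulis commute iff it vanishes. -/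
def symp {n : ℕ} (u v : M n) : ZMod 2 :=
  ∑ j, ((u j).1 * (v j).2 + (u j).2 * (v j).1)

/-- The inner `[[4,2,2]]` encoding of one qubit-pair symplectic entry. -/
def Emap (p : ZMod 2 × ZMod 2) : Fin 4 → ZMod 2 := ![p.1 + p.2, p.1, p.2, 0]

/-- Blockwise `[[4,2,2]]` encoding. -/
def Ehat {n : ℕ} (v : M n) : Fin n → Fin 4 → ZMod 2 := fun j => Emap (v j)

/-- The indicator vector of block `j` (the inner `XXXX`/`ZZZZ` stabilizer). -/
def beta {n : ℕ} (j : Fin n) : Fin n → Fin 4 → ZMod 2 :=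
  fun j' _ => if j' = j then 1 else 0

/-- The concatenated binary code `Ĉ(S)`. -/
def Chat {n : ℕ} (S : Submodule (ZMod 2) (M n)) :
    Submodule (ZMod 2) (Fin n → Fin 4 → ZMod 2) :=
  Submodule.span (ZMod 2) (Set.range (beta (n := n)) ∪ Ehat '' (S : Set (M n)))

/-- The standard dot product on the concatenated space. -/
def dotB {n : ℕ} (w w' : Fin n → Fin 4 → ZMod 2) : ZMod 2 :=
  ∑ j, ∑ i, w j i * w' j i

/-- The (Pauli) weight: the number of qubits on which `v` acts nontrivially. -/
def wt {n : ℕ} (v : M n) : ℕ := (Finset.univ.filter fun j => v j ≠ 0).card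

/-- The Hamming weight on the concatenated space. -/
def wtB {n : ℕ} (w : Fin n → Fin 4 → ZMod 2) : ℕ :=
  (Finset.univ.filter fun p : Fin n × Fin 4 => w p.1 p.2 ≠ 0).card

/- ### Auxiliary block-level computations (finite checks) -/

lemma emap_add : ∀ p q, Emap (p + q) = Emap p + Emap q := by decide

lemma emap_smul : ∀ (c : ZMod 2) p, Emap (c • p) = c • Emap p := by decide

lemma blockdot : ∀ (c c' : ZMod 2) (p q : ZMod 2 × ZMod 2),
    ∑ i, (c + Emap p i) * (c' + Emap q i) = p.1 * q.2 + p.2 * q.1 := by decide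

lemma blockcard : ∀ (c : ZMod 2) p,
    (Finset.univ.filter fun i : Fin 4 => c + Emap p i ≠ 0).card
      = if p = 0 then (if c = 0 then 0 else 4) else 2 := by decide

lemma blockrec : ∀ (b : Fin 4 → ZMod 2), (∑ i, b i = 0) →
    ∀ i, b i = b 3 + Emap (b 1 + b 3, b 2 + b 3) i := by decide

lemma blockdecode : ∀ (c : ZMod 2) (p : ZMod 2 × ZMod 2),
    ((c + Emap p 1) + (c + Emap p 3), (c + Emap p 2) + (c + Emap p 3)) = p := by decide

/- ### Linear maps -/

def BetaL (n : ℕ) : (Fin n → ZMod 2) →ₗ[ZMod 2] (Fin n → Fin 4 → ZMod 2) where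
  toFun c := fun j _ => c j
  map_add' := by intros; rfl
  map_smul' := by intros; rfl

def EhatL (n : ℕ) : M n →ₗ[ZMod 2] (Fin n → Fin 4 → ZMod 2) where
  toFun := Ehat
  map_add' u v := funext fun j => emap_add (u j) (v j)
  map_smul' c u := funext fun j => emap_smul c (u j)

lemma Chat_eq {n : ℕ} (S : Submodule (ZMod 2) (M n)) :
    Chat S = LinearMap.range (BetaL n) ⊔ Submodule.map (EhatL n) S := by
  unfold Chat
  rw [Submodule.span_union]
  congr 1
  · apply le_antisymm
    · rw [Submodule.span_le]
      rintro _ ⟨j, rfl⟩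
      refine ⟨Pi.single j 1, ?_⟩
      funext j' i
      simp [BetaL, beta, Pi.single_apply]
    · rintro _ ⟨c, rfl⟩
      have hc : (BetaL n c) = ∑ j, c j • beta j := by
        funext j' i
        simp [BetaL, beta, Finset.sum_apply, smul_eq_mul, mul_ite, mul_one, mul_zero]
      rw [hc]
      exact Submodule.sum_mem _ fun j _ =>
        Submodule.smul_mem _ _ (Submodule.subset_span ⟨j, rfl⟩)
  · have : Ehat (n := n) = ⇑(EhatL n) := rfl
    rw [this, Submodule.span_image, Submodule.span_eq]

lemma mem_Chat {n : ℕ} (S : Submodule (ZMod 2) (M n)) (w : Fin n → Fin 4 → ZMod 2) :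
    w ∈ Chat S ↔ ∃ c v, v ∈ S ∧ w = BetaL n c + EhatL n v := by
  rw [Chat_eq, Submodule.mem_sup]
  constructor
  · rintro ⟨y, ⟨c, rfl⟩, z, ⟨v, hv, rfl⟩, rfl⟩
    exact ⟨c, v, hv, rfl⟩
  · rintro ⟨c, v, hv, rfl⟩
    exact ⟨_, ⟨c, rfl⟩, _, ⟨v, hv, rfl⟩, rfl⟩

lemma decode_decomp {n : ℕ} (c : Fin n → ZMod 2) (v : M n) :
    (fun j => ((BetaL n c + EhatL n v) j 1 + (BetaL n c + EhatL n v) j 3,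
               (BetaL n c + EhatL n v) j 2 + (BetaL n c + EhatL n v) j 3)) = v :=
  funext fun j => blockdecode (c j) (v j)

lemma dot_decomp {n : ℕ} (c c' : Fin n → ZMod 2) (v v' : M n) :
    dotB (BetaL n c + EhatL n v) (BetaL n c' + EhatL n v') = symp v v' := by
  unfold dotB symp
  exact Finset.sum_congr rfl fun j _ => blockdot (c j) (c' j) (v j) (v' j)

lemma dot_decompE {n : ℕ} (c : Fin n → ZMod 2) (v v' : M n) :
    dotB (BetaL n c + EhatL n v) (EhatL n v') = symp v v' := by
  have h := dot_decomp c 0 v v'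
  rwa [map_zero, zero_add] at h

lemma dot_beta {n : ℕ} (w : Fin n → Fin 4 → ZMod 2) (j : Fin n) :
    dotB w (beta j) = ∑ i, w j i := by
  unfold dotB beta
  simp [mul_ite, mul_one, mul_zero, Finset.sum_ite_eq]

lemma wtB_blocks {n : ℕ} (w : Fin n → Fin 4 → ZMod 2) :
    wtB w = ∑ j, (Finset.univ.filter fun i => w j i ≠ 0).card := by
  rw [wtB, Finset.card_filter, Fintype.sum_prod_type]
  simp [Finset.card_filter]

lemma wtB_decomp {n : ℕ} (c : Fin n → ZMod 2) (v : M n) :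
    wtB (BetaL n c + EhatL n v)
      = ∑ j, if v j = 0 then (if c j = 0 then 0 else 4) else 2 := by
  rw [wtB_blocks]
  exact Finset.sum_congr rfl fun j _ => blockcard (c j) (v j)

lemma wt_eq {n : ℕ} (v : M n) : wt v = ∑ j, if v j = 0 then 0 else 1 := by
  rw [wt, Finset.card_filter]
  refine Finset.sum_congr rfl fun j _ => ?_
  by_cases h : v j = 0 <;> simp [h]

lemma wtB_ge {n : ℕ} (c : Fin n → ZMod 2) (v : M n) :
    2 * wt v ≤ wtB (BetaL n c + EhatL n v) := by
  rw [wtB_decomp, wt_eq, Finset.mul_sum]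
  refine Finset.sum_le_sum fun j _ => ?_
  by_cases h : v j = 0
  · simp [h]
  · simp [h]

lemma wtB_Ehat {n : ℕ} (v : M n) : wtB (EhatL n v) = 2 * wt v := by
  have h : EhatL n v = BetaL n (0 : Fin n → ZMod 2) + EhatL n v := by
    rw [map_zero, zero_add]
  rw [h, wtB_decomp, wt_eq, Finset.mul_sum]
  refine Finset.sum_congr rfl fun j _ => ?_
  by_cases hj : v j = 0 <;> simp [hj]

lemma mem_W_iff {n : ℕ} (S : Submodule (ZMod 2) (M n)) (w : Fin n → Fin 4 → ZMod 2) :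
    ((∀ c ∈ Chat S, dotB w c = 0) ∧ w ∉ Chat S) ↔
      ∃ c v, ((∀ s ∈ S, symp v s = 0) ∧ v ∉ S) ∧ w = BetaL n c + EhatL n v := by
  constructor
  · rintro ⟨hperp, hnot⟩
    have hbeta : ∀ j, ∑ i, w j i = 0 := by
      intro j
      have hmem : beta j ∈ Chat S := Submodule.subset_span (Or.inl ⟨j, rfl⟩)
      have := hperp (beta j) hmem
      rwa [dot_beta] at this
    set c : Fin n → ZMod 2 := fun j => w j 3 with hc
    set v : M n := fun j => (w j 1 + w j 3, w j 2 + w j 3) with hv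
    have hw : w = BetaL n c + EhatL n v := by
      funext j i
      exact blockrec (w j) (hbeta j) i
    refine ⟨c, v, ⟨?_, ?_⟩, hw⟩
    · intro s hs
      have hEs : Ehat s ∈ Chat S := Submodule.subset_span (Or.inr ⟨s, hs, rfl⟩)
      have := hperp (Ehat s) hEs
      rw [hw] at this
      rwa [show Ehat s = EhatL n s from rfl, dot_decompE] at this
    · intro hvS
      exact hnot ((mem_Chat S w).mpr ⟨c, v, hvS, hw⟩)
  · rintro ⟨c, v, ⟨hvperp, hvnot⟩, rfl⟩
    constructor
    · intro x hx
      obtain ⟨c', s, hs, rfl⟩ := (mem_Chat S x).mp hx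
      rw [dot_decomp]
      exact hvperp s hs
    · intro h
      obtain ⟨c', s, hs, heq⟩ := (mem_Chat S _).mp h
      have hv : v = s := by
        have h1 := decode_decomp c v
        rw [heq] at h1
        rw [decode_decomp c' s] at h1
        exact h1.symm
      exact hvnot (hv ▸ hs)

theorem stmt6 (n : ℕ) (S : Submodule (ZMod 2) (M n))
    (hS : ∀ u ∈ S, ∀ v ∈ S, symp u v = 0) (d : ℕ)
    (hne : ({v : M n | (∀ s ∈ S, symp v s = 0) ∧ v ∉ S}).Nonempty)
    (hd : sInf (wt '' {v : M n | (∀ s ∈ S, symp v s = 0) ∧ v ∉ S}) = d) :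
    ({w : Fin n → Fin 4 → ZMod 2 | (∀ c ∈ Chat S, dotB w c = 0) ∧ w ∉ Chat S}).Nonempty ∧
    sInf (wtB '' {w : Fin n → Fin 4 → ZMod 2 | (∀ c ∈ Chat S, dotB w c = 0) ∧ w ∉ Chat S})
      = 2 * d := by
  obtain ⟨v₀, hv₀⟩ := hne
  -- an element of the binary dual minus code
  have hEv₀ : (EhatL n v₀) ∈
      {w : Fin n → Fin 4 → ZMod 2 | (∀ c ∈ Chat S, dotB w c = 0) ∧ w ∉ Chat S} :=
    (mem_W_iff S _).mpr ⟨0, v₀, hv₀, by rw [map_zero, zero_add]⟩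
  have hWne : ({w : Fin n → Fin 4 → ZMod 2 |
      (∀ c ∈ Chat S, dotB w c = 0) ∧ w ∉ Chat S}).Nonempty := ⟨_, hEv₀⟩
  refine ⟨hWne, ?_⟩
  -- a minimal-weight Pauli element
  have hDne : (wt '' {v : M n | (∀ s ∈ S, symp v s = 0) ∧ v ∉ S}).Nonempty :=
    ⟨wt v₀, v₀, hv₀, rfl⟩
  obtain ⟨vm, hvmT, hvmwt⟩ := Nat.sInf_mem hDne
  rw [hd] at hvmwt
  have hEvm : (EhatL n vm) ∈
      {w : Fin n → Fin 4 → ZMod 2 | (∀ c ∈ Chat S, dotB w c = 0) ∧ w ∉ Chat S} :=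
    (mem_W_iff S _).mpr ⟨0, vm, hvmT, by rw [map_zero, zero_add]⟩
  apply le_antisymm
  · apply Nat.sInf_le
    exact ⟨EhatL n vm, hEvm, by rw [wtB_Ehat, hvmwt]⟩
  · apply le_csInf
    · exact hWne.image wtB
    · rintro m ⟨w, hwW, rfl⟩
      obtain ⟨c, v, hvT, rfl⟩ := (mem_W_iff S w).mp hwW
      have h1 : d ≤ wt v := hd ▸ Nat.sInf_le ⟨v, hvT, rfl⟩
      calc 2 * d ≤ 2 * wt v := by omega
        _ ≤ _ := wtB_ge c v
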